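/- The 24 residue classes 1(3), 2(5), 3(5), 4(7), 6(7), 0(9), 5(15), 11(15), 9(21), 12(21), 1(35), 14(35), 24(35), 29(35), 6(45), 15(45), 29(45), 30(45), 5(63), 23(63), 44(63), 66(105), 21(315), 89(315) form a cover of ℤ; that is, every integer x satisfies at least one of the congruences x ≡ 1 (mod 3), x ≡ 2 (mod 5), x ≡ 3 (mod 5), x ≡ 4 (mod 7), x ≡ 6 (mod 7), x ≡ 0 (mod 9), x ≡ 5 (mod 15), x ≡ 11 (mod 15), x ≡ 9 (mod 21), x ≡ 12 (mod 21), x ≡ 1 (mod 35), x ≡ 14 (mod 35), x ≡ 24 (mod 35), x ≡ 29 (mod 35), x ≡ 6 (mod 45), x ≡ 15 (mod 45), x ≡ 29 (mod 45), x ≡ 30 (mod 45), x ≡ 5 (mod 63), x ≡ 23 (mod 63), x ≡ 44 (mod 63), x ≡ 66 (mod 105), x ≡ 21 (mod 315), x ≡ 89 (mod 315). -/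
import Mathlib


set_option maxHeartbeats 1000000 in
/-- The 24 residue classes listed below form a cover of ℤ. -/
theorem odd_moduli_cover_24 (x : ℤ) :
    x ≡ 1 [ZMOD 3] ∨ x ≡ 2 [ZMOD 5] ∨ x ≡ 3 [ZMOD 5] ∨ x ≡ 4 [ZMOD 7] ∨
    x ≡ 6 [ZMOD 7] ∨ x ≡ 0 [ZMOD 9] ∨ x ≡ 5 [ZMOD 15] ∨ x ≡ 11 [ZMOD 15] ∨
    x ≡ 9 [ZMOD 21] ∨ x ≡ 12 [ZMOD 21] ∨ x ≡ 1 [ZMOD 35] ∨ x ≡ 14 [ZMOD 35] ∨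
    x ≡ 24 [ZMOD 35] ∨ x ≡ 29 [ZMOD 35] ∨ x ≡ 6 [ZMOD 45] ∨ x ≡ 15 [ZMOD 45] ∨
    x ≡ 29 [ZMOD 45] ∨ x ≡ 30 [ZMOD 45] ∨ x ≡ 5 [ZMOD 63] ∨ x ≡ 23 [ZMOD 63] ∨
    x ≡ 44 [ZMOD 63] ∨ x ≡ 66 [ZMOD 105] ∨ x ≡ 21 [ZMOD 315] ∨ x ≡ 89 [ZMOD 315] := by
  have h3 : x % 3 = x % 315 % 3 := (Int.emod_emod_of_dvd x (by norm_num)).symm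
  have h5 : x % 5 = x % 315 % 5 := (Int.emod_emod_of_dvd x (by norm_num)).symm
  have h7 : x % 7 = x % 315 % 7 := (Int.emod_emod_of_dvd x (by norm_num)).symm
  have h9 : x % 9 = x % 315 % 9 := (Int.emod_emod_of_dvd x (by norm_num)).symm
  have h15 : x % 15 = x % 315 % 15 := (Int.emod_emod_of_dvd x (by norm_num)).symm
  have h21 : x % 21 = x % 315 % 21 := (Int.emod_emod_of_dvd x (by norm_num)).symm
  have h35 : x % 35 = x % 315 % 35 := (Int.emod_emod_of_dvd x (by norm_num)).symm
  have h45 : x % 45 = x % 315 % 45 := (Int.emod_emod_of_dvd x (by norm_num)).symm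
  have h63 : x % 63 = x % 315 % 63 := (Int.emod_emod_of_dvd x (by norm_num)).symm
  have h105 : x % 105 = x % 315 % 105 := (Int.emod_emod_of_dvd x (by norm_num)).symm
  simp only [Int.ModEq]
  rw [h3, h5, h7, h9, h15, h21, h35, h45, h63, h105]
  have hlo : 0 ≤ x % 315 := Int.emod_nonneg x (by norm_num)
  have hhi : x % 315 < 315 := Int.emod_lt_of_pos x (by norm_num)
  generalize x % 315 = r at *
  interval_cases r <;> decide
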